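/- arXiv:2007.13166 — 2 statements merged into one kernel-verified Lean document; each statement's English description precedes it below -/
import Mathlib

section
/- Let u_i ∈ ℝ, and let R_i be a polynomial satisfying the cell-average conservation property (1/Δx)∫_{x_i - Δx/2}^{x_i + Δx/2} R_i(x) dx = u_i. Let M' and m' be the maximum and minimum of R_i on [x_i - Δx/2, x_i + Δx/2], and suppose m ≤ u_i ≤ M with m' < u_i < M' possible. Define ξ_i = min{1, |M - u_i|/|M' - u_i|, |m - u_i|/|m' - u_i|} (with the convention that a ratio is 1 if its denominator is 0) and the rescaled polynomial R̃_i(x) = u_i + ξ_i (R_i(x) - u_i). Then R̃_i has the same cell average u_i and satisfies m ≤ R̃_i(x) ≤ M for all x in [x_i - Δx/2, x_i + Δx/2]. -/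
open intervalIntegral

/-- Zhang–Shu MPP linear scaling limiter: the rescaled polynomial `R̃ = u + ξ(R - u)`
keeps the cell average `u` and is bounded by the global bounds `m ≤ R̃ ≤ M` on the cell. -/
theorem mpp_limiter (Δx xi u m M : ℝ) (hΔx : 0 < Δx)
    (R : Polynomial ℝ)
    (havg : (1 / Δx) * ∫ x in (xi - Δx / 2)..(xi + Δx / 2), R.eval x = u)
    (M' m' : ℝ)
    (hM' : IsGreatest ((fun x => R.eval x) '' Set.Icc (xi - Δx / 2) (xi + Δx / 2)) M')
    (hm' : IsLeast ((fun x => R.eval x) '' Set.Icc (xi - Δx / 2) (xi + Δx / 2)) m')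
    (hmu : m ≤ u) (huM : u ≤ M)
    (ξ : ℝ)
    (hξ : ξ = min 1 (min (if M' = u then 1 else |M - u| / |M' - u|)
                         (if m' = u then 1 else |m - u| / |m' - u|)))
    (Rt : ℝ → ℝ)
    (hRt : ∀ x, Rt x = u + ξ * (R.eval x - u)) :
    (1 / Δx) * (∫ x in (xi - Δx / 2)..(xi + Δx / 2), Rt x) = u ∧
    ∀ x ∈ Set.Icc (xi - Δx / 2) (xi + Δx / 2), m ≤ Rt x ∧ Rt x ≤ M := by
  set a := xi - Δx / 2 with ha
  set b := xi + Δx / 2 with hb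
  have hab : a ≤ b := by simp [ha, hb]; linarith
  have hba : b - a = Δx := by rw [ha, hb]; ring
  have hRint : IntervalIntegrable (fun x => R.eval x) MeasureTheory.volume a b :=
    (R.continuous_aeval).intervalIntegrable a b
  have hIR : (∫ x in a..b, R.eval x) = Δx * u := by
    field_simp at havg; linarith [havg]
  -- ξ bounds
  have hξ0 : 0 ≤ ξ := by
    rw [hξ]
    apply le_min (by norm_num)
    apply le_min
    · split_ifs with h
      · norm_num
      · positivity
    · split_ifs with h
      · norm_num
      · positivity
  have hξ1 : ξ ≤ 1 := by rw [hξ]; exact min_le_left _ _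
  -- u between m' and M'
  have huM' : u ≤ M' := by
    have h1 : (∫ x in a..b, R.eval x) ≤ ∫ _x in a..b, M' := by
      apply intervalIntegral.integral_mono_on hab hRint (intervalIntegrable_const)
      intro x hx
      exact hM'.2 ⟨x, hx, rfl⟩
    rw [hIR, intervalIntegral.integral_const, hba, smul_eq_mul] at h1
    nlinarith
  have hm'u : m' ≤ u := by
    have h1 : (∫ _x in a..b, m') ≤ ∫ x in a..b, R.eval x := by
      apply intervalIntegral.integral_mono_on hab (intervalIntegrable_const) hRint
      intro x hx
      exact hm'.2 ⟨x, hx, rfl⟩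
    rw [hIR, intervalIntegral.integral_const, hba, smul_eq_mul] at h1
    nlinarith
  constructor
  · have : (∫ x in a..b, Rt x) = ∫ x in a..b, (u + ξ * (R.eval x - u)) := by
      apply intervalIntegral.integral_congr
      intro x _; exact hRt x
    rw [this]
    have hInt2 : IntervalIntegrable (fun x => ξ * (R.eval x - u)) MeasureTheory.volume a b :=
      ((hRint.sub intervalIntegrable_const).const_mul ξ)
    rw [intervalIntegral.integral_add intervalIntegrable_const hInt2,
      intervalIntegral.integral_const_mul,
      intervalIntegral.integral_sub hRint intervalIntegrable_const,
      intervalIntegral.integral_const, hIR, hba, smul_eq_mul]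
    field_simp
    ring
  · intro x hx
    have hle : R.eval x ≤ M' := hM'.2 ⟨x, hx, rfl⟩
    have hge : m' ≤ R.eval x := hm'.2 ⟨x, hx, rfl⟩
    rw [hRt x]
    constructor
    · -- lower bound
      rcases le_or_gt u (R.eval x) with h | h
      · nlinarith
      · have hm'lt : m' < u := lt_of_le_of_lt hge h
        have hne : m' ≠ u := ne_of_lt hm'lt
        have hξle : ξ ≤ (u - m)/(u - m') := by
          have : ξ ≤ if m' = u then 1 else |m - u| / |m' - u| := by
            rw [hξ]; exact le_trans (min_le_right _ _) (min_le_right _ _)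
          rw [if_neg hne] at this
          rwa [abs_sub_comm m u, abs_sub_comm m' u, abs_of_nonneg (by linarith), abs_of_nonneg (by linarith)] at this
        have h2 : ξ * (u - R.eval x) ≤ ξ * (u - m') := by nlinarith
        have h3 : ξ * (u - m') ≤ u - m := by
          rw [← div_mul_cancel₀ (u - m) (show u - m' ≠ 0 by linarith)]
          exact mul_le_mul_of_nonneg_right hξle (by linarith)
        nlinarith
    · rcases le_or_gt (R.eval x) u with h | h
      · nlinarith
      · have hM'gt : u < M' := lt_of_lt_of_le h hle
        have hne : M' ≠ u := ne_of_gt hM'gt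
        have hξle : ξ ≤ (M - u)/(M' - u) := by
          have : ξ ≤ if M' = u then 1 else |M - u| / |M' - u| := by
            rw [hξ]; exact le_trans (min_le_right _ _) (min_le_left _ _)
          rw [if_neg hne] at this
          rwa [abs_of_nonneg (by linarith), abs_of_pos (by linarith)] at this
        have h2 : ξ * (R.eval x - u) ≤ ξ * (M' - u) := by nlinarith
        have h3 : ξ * (M' - u) ≤ M - u := by
          rw [← div_mul_cancel₀ (M - u) (show M' - u ≠ 0 by linarith)]
          exact mul_le_mul_of_nonneg_right hξle (by linarith)
        nlinarith
end

section
/- Strang splitting for rigid rotation shifts: define shift operators on functions u : ℝ² → ℝ by (e^{τ𝒳}u)(x,y) = u(x + yτ, y) and (e^{τ𝒴}u)(x,y) = u(x, y - xτ). Then for u of class C³ (with bounded derivatives up to order 3), the Strang composition (e^{(Δt/2)𝒴} e^{Δt𝒳} e^{(Δt/2)𝒴} u)(x,y) agrees with the exact rotated solution u(x cos Δt + y sin Δt, -x sin Δt + y cos Δt) up to O(Δt³) as Δt → 0, locally uniformly in (x,y). -/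
/-- Shift along the x-axis: exact solution operator of `u_t - y u_x = 0` over time `τ`. -/
noncomputable def shiftX (τ : ℝ) (u : ℝ × ℝ → ℝ) : ℝ × ℝ → ℝ :=
  fun p => u (p.1 + p.2 * τ, p.2)

/-- Shift along the y-axis: exact solution operator of `u_t + x u_y = 0` over time `τ`. -/
noncomputable def shiftY (τ : ℝ) (u : ℝ × ℝ → ℝ) : ℝ × ℝ → ℝ :=
  fun p => u (p.1, p.2 - p.1 * τ)

lemma abs_sin_sub_id {t : ℝ} (ht : |t| ≤ 1) : |Real.sin t - t| ≤ |t| ^ 3 := by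
  have h := Real.sin_bound ht
  have h3 : |t ^ 3| = |t| ^ 3 := abs_pow t 3
  have h4 : |t| ^ 4 ≤ |t| ^ 3 := pow_le_pow_of_le_one (abs_nonneg t) ht (by norm_num)
  have := abs_sub_abs_le_abs_sub (Real.sin t - t) (-(t ^ 3 / 6))
  have h5 : |Real.sin t - t| ≤ |Real.sin t - (t - t ^ 3 / 6)| + |t ^ 3 / 6| := by
    calc |Real.sin t - t| = |(Real.sin t - (t - t ^ 3 / 6)) + (-(t ^ 3 / 6))| := by ring_nf
    _ ≤ |Real.sin t - (t - t ^ 3 / 6)| + |(-(t ^ 3 / 6))| := abs_add_le _ _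
    _ = |Real.sin t - (t - t ^ 3 / 6)| + |t ^ 3 / 6| := by rw [abs_neg]
  have h6 : |t ^ 3 / 6| = |t| ^ 3 / 6 := by rw [abs_div, h3]; norm_num
  linarith [pow_nonneg (abs_nonneg t) 3, pow_le_pow_of_le_one (abs_nonneg t) ht (by norm_num : 3 ≤ 5)]

lemma abs_cos_sub_quad {t : ℝ} (ht : |t| ≤ 1) : |Real.cos t - (1 - t ^ 2 / 2)| ≤ |t| ^ 3 := by
  have h := Real.cos_bound ht
  have h4 : |t| ^ 4 ≤ |t| ^ 3 := pow_le_pow_of_le_one (abs_nonneg t) ht (by norm_num)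
  linarith [pow_nonneg (abs_nonneg t) 3]

/-- Strang splitting for rigid rotation: for `u` of class C³ with bounded derivatives up
to order 3, the composition `e^{(Δt/2)𝒴} e^{Δt𝒳} e^{(Δt/2)𝒴} u` agrees with the exact
rotated solution up to `O(Δt³)`, locally uniformly in `(x, y)`. -/
theorem strang_splitting_rigid_rotation
    (u : ℝ × ℝ → ℝ) (hu : ContDiff ℝ 3 u)
    (hbdd : ∀ n : ℕ, n ≤ 3 → ∃ C : ℝ, ∀ p, ‖iteratedFDeriv ℝ n u p‖ ≤ C) :
    ∀ K : Set (ℝ × ℝ), IsCompact K →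
      ∃ C δ : ℝ, 0 < δ ∧ ∀ p ∈ K, ∀ Δt : ℝ, |Δt| ≤ δ →
        |shiftY (Δt / 2) (shiftX Δt (shiftY (Δt / 2) u)) p
            - u (p.1 * Real.cos Δt + p.2 * Real.sin Δt,
                 -p.1 * Real.sin Δt + p.2 * Real.cos Δt)|
          ≤ C * |Δt| ^ 3 := by
  intro K hK
  obtain ⟨M, hM⟩ := hK.isBounded.exists_norm_le
  obtain ⟨L, hL⟩ := hbdd 1 (by norm_num)
  set M' : ℝ := max M 0 with hM'def
  set L' : ℝ := max L 0 with hL'def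
  have hM'0 : 0 ≤ M' := le_max_right _ _
  have hL'0 : 0 ≤ L' := le_max_right _ _
  have hfd : ∀ q : ℝ × ℝ, ‖fderiv ℝ u q‖ ≤ L' := by
    intro q
    have : ‖fderiv ℝ u q‖ = ‖iteratedFDeriv ℝ 1 u q‖ := by
      rw [← norm_iteratedFDeriv_fderiv, norm_iteratedFDeriv_zero]
    rw [this]
    exact le_trans (hL q) (le_max_left _ _)
  have hdiff : Differentiable ℝ u := hu.differentiable (by norm_num)
  have hlip : ∀ P Q : ℝ × ℝ, |u P - u Q| ≤ L' * ‖P - Q‖ := by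
    intro P Q
    have := convex_univ.norm_image_sub_le_of_norm_fderiv_le
      (fun x _ => hdiff x) (fun x _ => hfd x)
      (Set.mem_univ Q) (Set.mem_univ P)
    simpa [Real.norm_eq_abs] using this
  refine ⟨L' * (3 * M'), 1, one_pos, ?_⟩
  intro p hp t ht
  obtain ⟨x, y⟩ := p
  have hx : |x| ≤ M' := by
    have h1 : |x| ≤ ‖((x, y) : ℝ × ℝ)‖ := by
      simp [Prod.norm_def, Real.norm_eq_abs]
    exact le_trans (h1.trans (hM _ hp)) (le_max_left _ _)
  have hy : |y| ≤ M' := by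
    have h1 : |y| ≤ ‖((x, y) : ℝ × ℝ)‖ := by
      simp [Prod.norm_def, Real.norm_eq_abs]
    exact le_trans (h1.trans (hM _ hp)) (le_max_left _ _)
  have hsin := abs_sin_sub_id ht
  have hcos := abs_cos_sub_quad ht
  have ht3 : 0 ≤ |t| ^ 3 := by positivity
  simp only [shiftX, shiftY]
  set A : ℝ × ℝ := (x + (y - x * (t / 2)) * t,
    y - x * (t / 2) - (x + (y - x * (t / 2)) * t) * (t / 2)) with hA
  set B : ℝ × ℝ := (x * Real.cos t + y * Real.sin t,
    -x * Real.sin t + y * Real.cos t) with hB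
  show |u A - u B| ≤ L' * (3 * M') * |t| ^ 3
  have key : ‖A - B‖ ≤ 3 * M' * |t| ^ 3 := by
    have h1 : |A.1 - B.1| ≤ 2 * M' * |t| ^ 3 := by
      have : A.1 - B.1 = (-x) * (Real.cos t - (1 - t ^ 2 / 2)) + (-y) * (Real.sin t - t) := by
        simp only [hA, hB]; ring
      rw [this]
      calc |(-x) * (Real.cos t - (1 - t ^ 2 / 2)) + (-y) * (Real.sin t - t)|
          ≤ |(-x)| * |Real.cos t - (1 - t ^ 2 / 2)| + |(-y)| * |Real.sin t - t| := by
            refine le_trans (abs_add_le _ _) ?_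
            rw [abs_mul, abs_mul]
        _ ≤ M' * |t| ^ 3 + M' * |t| ^ 3 := by
            rw [abs_neg, abs_neg]
            gcongr
        _ = 2 * M' * |t| ^ 3 := by ring
    have h2 : |A.2 - B.2| ≤ 3 * M' * |t| ^ 3 := by
      have : A.2 - B.2 = x * (Real.sin t - t) + x * (t ^ 3 / 4)
          + (-y) * (Real.cos t - (1 - t ^ 2 / 2)) := by
        simp only [hA, hB]; ring
      rw [this]
      have habs3 : |t ^ 3 / 4| = |t| ^ 3 / 4 := by rw [abs_div, abs_pow]; norm_num
      calc |x * (Real.sin t - t) + x * (t ^ 3 / 4) + (-y) * (Real.cos t - (1 - t ^ 2 / 2))|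
          ≤ |x| * |Real.sin t - t| + |x| * |t ^ 3 / 4|
            + |(-y)| * |Real.cos t - (1 - t ^ 2 / 2)| := by
            refine le_trans (abs_add_three _ _ _) ?_
            rw [abs_mul, abs_mul, abs_mul]
        _ ≤ M' * |t| ^ 3 + M' * (|t| ^ 3 / 4) + M' * |t| ^ 3 := by
            rw [abs_neg, habs3]
            gcongr
        _ ≤ 3 * M' * |t| ^ 3 := by nlinarith
    have : ‖A - B‖ = max |A.1 - B.1| |A.2 - B.2| := by
      rw [Prod.norm_def]; rfl
    rw [this]
    exact max_le (le_trans h1 (by nlinarith)) h2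
  calc |u A - u B| ≤ L' * ‖A - B‖ := hlip A B
    _ ≤ L' * (3 * M' * |t| ^ 3) := by gcongr
    _ = L' * (3 * M') * |t| ^ 3 := by ring
end
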